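/- Let v_1, ..., v_T ∈ ℝ^K and let m ∈ {1, ..., T−1}. Then the symmetric matrix Σ_{t=1}^{T−m}(v_t v_{t+m}′ + v_{t+m} v_t′) + 2 Σ_{t=1}^T v_t v_t′ is positive semidefinite; indeed it dominates Σ_{t=1}^{T−m} (v_t + v_{t+m})(v_t + v_{t+m})′ in the psd order. -/

import Mathlib

open Finset Matrix

private lemma psd_vmv (K : ℕ) (v : Fin K → ℝ) : (Matrix.vecMulVec v v).PosSemidef := by
  refine Matrix.PosSemidef.of_dotProduct_mulVec_nonneg ?_ ?_
  · ext i j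
    simp [Matrix.vecMulVec_apply, Matrix.conjTranspose_apply, mul_comm]
  · intro x
    have h : star x ⬝ᵥ (Matrix.vecMulVec v v *ᵥ x) = (v ⬝ᵥ x) * (v ⬝ᵥ x) := by
      simp only [dotProduct, Matrix.mulVec, Matrix.vecMulVec_apply, Pi.star_apply,
        star_trivial, Finset.mul_sum, Finset.sum_mul]
      apply Finset.sum_congr rfl; intro i _
      apply Finset.sum_congr rfl; intro j _
      ring
    rw [h]
    exact mul_self_nonneg _

private lemma psd_sum (K : ℕ) {ι : Type*} (s : Finset ι) (f : ι → Matrix (Fin K) (Fin K) ℝ)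
    (h : ∀ i ∈ s, (f i).PosSemidef) : (∑ i ∈ s, f i).PosSemidef := by
  classical
  induction s using Finset.induction_on with
  | empty => simpa using Matrix.PosSemidef.zero
  | insert _ _ hx ih =>
    rw [Finset.sum_insert hx]
    exact (h _ (Finset.mem_insert_self _ _)).add
      (ih fun i hi => h i (Finset.mem_insert_of_mem hi))

private lemma vmv_add (K : ℕ) (a b : Fin K → ℝ) :
    Matrix.vecMulVec (a + b) (a + b) =
      Matrix.vecMulVec a a + (Matrix.vecMulVec a b + Matrix.vecMulVec b a)
        + Matrix.vecMulVec b b := by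
  ext i j
  simp [Matrix.vecMulVec_apply]
  ring

theorem stmt_8 (K T m : ℕ) (hm1 : 1 ≤ m) (hm : m ≤ T - 1) (v : ℕ → Fin K → ℝ) :
    Matrix.PosSemidef
      ((∑ t ∈ Finset.range (T - m),
          (Matrix.vecMulVec (v t) (v (t + m)) + Matrix.vecMulVec (v (t + m)) (v t)))
        + 2 • ∑ t ∈ Finset.range T, Matrix.vecMulVec (v t) (v t)
        - ∑ t ∈ Finset.range (T - m),
            Matrix.vecMulVec (v t + v (t + m)) (v t + v (t + m))) ∧
    Matrix.PosSemidef
      ((∑ t ∈ Finset.range (T - m),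
          (Matrix.vecMulVec (v t) (v (t + m)) + Matrix.vecMulVec (v (t + m)) (v t)))
        + 2 • ∑ t ∈ Finset.range T, Matrix.vecMulVec (v t) (v t)) := by
  have hT : m < T := by omega
  set C := ∑ t ∈ Finset.range (T - m),
      (Matrix.vecMulVec (v t) (v (t + m)) + Matrix.vecMulVec (v (t + m)) (v t)) with hC
  set S := ∑ t ∈ Finset.range T, Matrix.vecMulVec (v t) (v t) with hS
  set Q := ∑ t ∈ Finset.range (T - m),
      Matrix.vecMulVec (v t + v (t + m)) (v t + v (t + m)) with hQ
  have hQexp : Q = (∑ t ∈ Finset.range (T - m), Matrix.vecMulVec (v t) (v t))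
      + C + ∑ t ∈ Finset.range (T - m), Matrix.vecMulVec (v (t + m)) (v (t + m)) := by
    rw [hQ, hC]
    rw [← Finset.sum_add_distrib, ← Finset.sum_add_distrib]
    apply Finset.sum_congr rfl
    intro t _
    rw [vmv_add]
  have hshift : ∑ t ∈ Finset.range (T - m), Matrix.vecMulVec (v (t + m)) (v (t + m))
      = ∑ t ∈ Finset.Ico m T, Matrix.vecMulVec (v t) (v t) := by
    rw [Finset.sum_Ico_eq_sum_range]
    exact Finset.sum_congr rfl fun t _ => by rw [Nat.add_comm m t]
  have hsplit1 : (∑ t ∈ Finset.range (T - m), Matrix.vecMulVec (v t) (v t))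
      + ∑ t ∈ Finset.Ico (T - m) T, Matrix.vecMulVec (v t) (v t) = S := by
    rw [hS, Finset.range_eq_Ico, Finset.range_eq_Ico]
    exact Finset.sum_Ico_consecutive _ (Nat.zero_le _) (by omega)
  have hsplit2 : (∑ t ∈ Finset.range m, Matrix.vecMulVec (v t) (v t))
      + ∑ t ∈ Finset.Ico m T, Matrix.vecMulVec (v t) (v t) = S := by
    rw [hS, Finset.range_eq_Ico, Finset.range_eq_Ico]
    exact Finset.sum_Ico_consecutive _ (Nat.zero_le _) (by omega)
  have hkey : (∑ t ∈ Finset.range (T - m), Matrix.vecMulVec (v t) (v t))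
      + ∑ t ∈ Finset.Ico (T - m) T, Matrix.vecMulVec (v t) (v t)
      = (∑ t ∈ Finset.range m, Matrix.vecMulVec (v t) (v t))
      + ∑ t ∈ Finset.Ico m T, Matrix.vecMulVec (v t) (v t) :=
    hsplit1.trans hsplit2.symm
  have hE1 : C + 2 • S - Q
      = (∑ t ∈ Finset.Ico (T - m) T, Matrix.vecMulVec (v t) (v t))
        + ∑ t ∈ Finset.range m, Matrix.vecMulVec (v t) (v t) := by
    rw [hQexp, hshift, two_smul, ← hsplit1]
    nth_rewrite 2 [hkey]
    abel
  have h1 : Matrix.PosSemidef (C + 2 • S - Q) := by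
    rw [hE1]
    exact (psd_sum K _ _ fun i _ => psd_vmv K (v i)).add
      (psd_sum K _ _ fun i _ => psd_vmv K (v i))
  refine ⟨h1, ?_⟩
  have h2 : C + 2 • S = (C + 2 • S - Q) + Q := by abel
  rw [h2]
  exact h1.add (psd_sum K _ _ fun i _ => psd_vmv K (v i + v (i + m)))
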